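/- Let A ∈ ℝ^{n×n}, B ∈ ℝ^{n×s}, and let 𝒱 ∈ ℝ^{n×q} satisfy 𝒱ᵀ𝒱 = I_q and have column space equal to the block Krylov subspace 𝕂_m(A,B), the span of all columns of B, AB, …, A^{m−1}B. Set 𝒯 = 𝒱ᵀ A 𝒱, B_m = 𝒱ᵀ B and ρ = ‖A‖. Then ‖ e^{A} B − 𝒱 e^{𝒯} B_m ‖ ≤ 2 ‖B‖ · ρ^m e^{ρ} / m!. -/

import Mathlib

open Matrix Set
open scoped Matrix.Norms.L2Operator

private lemma col_mul_eq {l p r : Type*} [Fintype p] (X : Matrix l p ℝ) (Y : Matrix p r ℝ)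
    (j : r) : (fun i => (X * Y) i j) = X.mulVec (fun k => Y k j) := by
  funext i
  simp [Matrix.mul_apply, Matrix.mulVec, dotProduct]

theorem krylov_exp_approx_bound
    (n s q m : ℕ) (hn : 0 < n) (hs : 0 < s) (hq : 0 < q) (hm : 0 < m)
    (A : Matrix (Fin n) (Fin n) ℝ) (B : Matrix (Fin n) (Fin s) ℝ)
    (V : Matrix (Fin n) (Fin q) ℝ) (hV : Vᵀ * V = 1)
    (hrange : LinearMap.range (Matrix.mulVecLin V) =
      Submodule.span ℝ
        {v : Fin n → ℝ | ∃ k < m, ∃ j : Fin s, v = fun i => (A ^ k * B) i j})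
    (T : Matrix (Fin q) (Fin q) ℝ) (hT : T = Vᵀ * A * V)
    (Bm : Matrix (Fin q) (Fin s) ℝ) (hBm : Bm = Vᵀ * B) :
    ‖NormedSpace.exp A * B - V * NormedSpace.exp T * Bm‖ ≤
      2 * ‖B‖ * (‖A‖ ^ m * Real.exp ‖A‖ / (Nat.factorial m)) := by
  -- conjugate transpose over ℝ is transpose
  have hVH : Vᴴ = Vᵀ := Matrix.conjTranspose_eq_transpose_of_trivial V
  have hV' : Vᴴ * V = 1 := by rw [hVH]; exact hV
  -- norm of the identity
  have hone : ‖(1 : Matrix (Fin q) (Fin q) ℝ)‖ = 1 := by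
    have h := Matrix.l2_opNorm_conjTranspose_mul_self (1 : Matrix (Fin q) (Fin q) ℝ)
    rw [Matrix.conjTranspose_one, one_mul] at h
    have hne : ‖(1 : Matrix (Fin q) (Fin q) ℝ)‖ ≠ 0 := by
      simp only [ne_eq, norm_eq_zero]
      intro h10
      have h00 := congrFun (congrFun h10 (⟨0, hq⟩ : Fin q)) (⟨0, hq⟩ : Fin q)
      simp [Matrix.one_apply] at h00
    have h' : ‖(1 : Matrix (Fin q) (Fin q) ℝ)‖ * 1 =
        ‖(1 : Matrix (Fin q) (Fin q) ℝ)‖ * ‖(1 : Matrix (Fin q) (Fin q) ℝ)‖ := by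
      rw [mul_one]; exact h
    exact (mul_left_cancel₀ hne h').symm
  -- ‖V‖ = 1, ‖Vᵀ‖ = 1
  have hVn : ‖V‖ = 1 := by
    have h := Matrix.l2_opNorm_conjTranspose_mul_self V
    rw [hV', hone] at h
    nlinarith [norm_nonneg V]
  have hVTn : ‖Vᵀ‖ = 1 := by
    rw [← hVH, Matrix.l2_opNorm_conjTranspose, hVn]
  -- ‖T‖ ≤ ‖A‖
  have hTn : ‖T‖ ≤ ‖A‖ := by
    rw [hT]
    calc ‖Vᵀ * A * V‖ ≤ ‖Vᵀ * A‖ * ‖V‖ := Matrix.l2_opNorm_mul _ _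
      _ ≤ ‖Vᵀ‖ * ‖A‖ * ‖V‖ := by
          gcongr
          exact Matrix.l2_opNorm_mul _ _
      _ = ‖A‖ := by rw [hVTn, hVn]; ring
  have hBmn : ‖Bm‖ ≤ ‖B‖ := by
    rw [hBm]
    calc ‖Vᵀ * B‖ ≤ ‖Vᵀ‖ * ‖B‖ := Matrix.l2_opNorm_mul _ _
      _ = ‖B‖ := by rw [hVTn, one_mul]
  -- projection property
  have hproj : ∀ (M : Matrix (Fin n) (Fin s) ℝ),
      (∀ j, (fun i => M i j) ∈ LinearMap.range (Matrix.mulVecLin V)) →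
      V * (Vᵀ * M) = M := by
    intro M hM
    ext i j
    obtain ⟨y, hy⟩ := hM j
    have hy' : (fun i => M i j) = V.mulVec y := by rw [← hy]; rfl
    have key : (fun i => (V * (Vᵀ * M)) i j) = fun i => M i j := by
      rw [col_mul_eq V (Vᵀ * M) j, col_mul_eq Vᵀ M j, hy']
      have hinner : Vᵀ.mulVec (V.mulVec y) = y := by
        rw [Matrix.mulVec_mulVec, hV, Matrix.one_mulVec]
      rw [hinner]
    exact congrFun key i
  -- columns of A^k * B lie in the range of V
  have hcols : ∀ k, k < m → ∀ j,
      (fun i => (A ^ k * B) i j) ∈ LinearMap.range (Matrix.mulVecLin V) := by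
    intro k hk j
    rw [hrange]
    exact Submodule.subset_span ⟨k, hk, j, rfl⟩
  -- key exactness identity
  have hkey : ∀ k, k < m → V * (T ^ k * Bm) = A ^ k * B := by
    intro k
    induction k with
    | zero =>
        intro _
        rw [pow_zero, Matrix.one_mul, pow_zero, Matrix.one_mul, hBm]
        apply hproj
        intro j
        have h0 := hcols 0 hm j
        simpa [pow_zero, Matrix.one_mul] using h0
    | succ k ih =>
        intro hk1
        have hk : k < m := Nat.lt_of_succ_lt hk1
        calc V * (T ^ (k + 1) * Bm) = V * (Vᵀ * (A * (V * (T ^ k * Bm)))) := by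
              rw [pow_succ', hT]
              simp only [Matrix.mul_assoc]
          _ = V * (Vᵀ * (A * (A ^ k * B))) := by rw [ih hk]
          _ = V * (Vᵀ * (A ^ (k + 1) * B)) := by
              rw [← Matrix.mul_assoc A (A ^ k) B, ← pow_succ']
          _ = A ^ (k + 1) * B := hproj _ (hcols (k + 1) hk1)
  -- continuous linear maps
  let L1 : Matrix (Fin n) (Fin n) ℝ →L[ℝ] Matrix (Fin n) (Fin s) ℝ :=
    LinearMap.toContinuousLinearMap
      { toFun := fun M => M * B
        map_add' := fun x y => Matrix.add_mul x y B
        map_smul' := fun c x => Matrix.smul_mul c x B }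
  let L2 : Matrix (Fin q) (Fin q) ℝ →L[ℝ] Matrix (Fin n) (Fin s) ℝ :=
    LinearMap.toContinuousLinearMap
      { toFun := fun M => V * M * Bm
        map_add' := fun x y => by simp [Matrix.mul_add, Matrix.add_mul]
        map_smul' := fun c x => by simp [Matrix.mul_smul, Matrix.smul_mul] }
  have hL1 : ∀ M, L1 M = M * B := fun M => rfl
  have hL2 : ∀ M, L2 M = V * M * Bm := fun M => rfl
  -- series expansions
  have hsumA := NormedSpace.expSeries_summable' (𝕂 := ℝ) A
  have hsumT := NormedSpace.expSeries_summable' (𝕂 := ℝ) T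
  have hexpA : NormedSpace.exp A * B =
      ∑' k : ℕ, ((k.factorial : ℝ)⁻¹) • (A ^ k * B) := by
    have h := ContinuousLinearMap.map_tsum L1 hsumA
    rw [← hL1 (NormedSpace.exp A)]
    rw [NormedSpace.exp_eq_tsum ℝ]
    rw [h]
    congr 1
    funext k
    rw [L1.map_smul, hL1]
  have hexpT : V * NormedSpace.exp T * Bm =
      ∑' k : ℕ, ((k.factorial : ℝ)⁻¹) • (V * T ^ k * Bm) := by
    have h := ContinuousLinearMap.map_tsum L2 hsumT
    rw [← hL2 (NormedSpace.exp T)]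
    rw [NormedSpace.exp_eq_tsum ℝ]
    rw [h]
    congr 1
    funext k
    rw [L2.map_smul, hL2]
  -- summability of the two mapped series
  have hsA : Summable (fun k : ℕ => ((k.factorial : ℝ)⁻¹) • (A ^ k * B)) := by
    have hh := (hsumA.hasSum.mapL L1).summable
    simpa only [L1.map_smul, hL1] using hh
  have hsT : Summable (fun k : ℕ => ((k.factorial : ℝ)⁻¹) • (V * T ^ k * Bm)) := by
    have hh := (hsumT.hasSum.mapL L2).summable
    simpa only [L2.map_smul, hL2] using hh
  set f : ℕ → Matrix (Fin n) (Fin s) ℝ :=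
    fun k => ((k.factorial : ℝ)⁻¹) • (A ^ k * B) - ((k.factorial : ℝ)⁻¹) • (V * T ^ k * Bm)
    with hf
  have hfsum : Summable f := hsA.sub hsT
  have hdiff : NormedSpace.exp A * B - V * NormedSpace.exp T * Bm = ∑' k, f k := by
    rw [hexpA, hexpT, hsA.tsum_sub hsT]
  -- terms below m vanish
  have hzero : ∀ k, k < m → f k = 0 := by
    intro k hk
    have h1 : V * T ^ k * Bm = A ^ k * B := by
      rw [Matrix.mul_assoc]; exact hkey k hk
    have h2 : f k = ((k.factorial : ℝ)⁻¹) • (A ^ k * B) -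
        ((k.factorial : ℝ)⁻¹) • (V * T ^ k * Bm) := rfl
    rw [h2, h1, sub_self]
  -- pointwise norm bound beyond m
  have hbound : ∀ j : ℕ, 0 < j → ‖f j‖ ≤ 2 * ‖A‖ ^ j * ‖B‖ / j.factorial := by
    intro j hj
    have hA : ‖A ^ j * B‖ ≤ ‖A‖ ^ j * ‖B‖ := by
      calc ‖A ^ j * B‖ ≤ ‖A ^ j‖ * ‖B‖ := Matrix.l2_opNorm_mul _ _
        _ ≤ ‖A‖ ^ j * ‖B‖ := by gcongr; exact norm_pow_le' A hj
    have hTj : ‖V * T ^ j * Bm‖ ≤ ‖A‖ ^ j * ‖B‖ := by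
      calc ‖V * T ^ j * Bm‖ ≤ ‖V * T ^ j‖ * ‖Bm‖ := Matrix.l2_opNorm_mul _ _
        _ ≤ ‖V‖ * ‖T ^ j‖ * ‖Bm‖ := by gcongr; exact Matrix.l2_opNorm_mul _ _
        _ ≤ 1 * ‖A‖ ^ j * ‖B‖ := by
            rw [hVn]
            have h1 : ‖T ^ j‖ ≤ ‖A‖ ^ j :=
              (norm_pow_le' T hj).trans (pow_le_pow_left₀ (norm_nonneg T) hTn j)
            gcongr
        _ = ‖A‖ ^ j * ‖B‖ := by ring
    have hnn : (0 : ℝ) ≤ (j.factorial : ℝ)⁻¹ := by positivity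
    calc ‖f j‖ ≤ ‖((j.factorial : ℝ)⁻¹) • (A ^ j * B)‖ +
          ‖((j.factorial : ℝ)⁻¹) • (V * T ^ j * Bm)‖ := norm_sub_le _ _
      _ = (j.factorial : ℝ)⁻¹ * ‖A ^ j * B‖ + (j.factorial : ℝ)⁻¹ * ‖V * T ^ j * Bm‖ := by
          rw [norm_smul, norm_smul, Real.norm_of_nonneg hnn]
      _ ≤ (j.factorial : ℝ)⁻¹ * (‖A‖ ^ j * ‖B‖) + (j.factorial : ℝ)⁻¹ * (‖A‖ ^ j * ‖B‖) := by
          gcongr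
      _ = 2 * ‖A‖ ^ j * ‖B‖ / j.factorial := by
          rw [div_eq_mul_inv]
          ring
  -- the comparison series
  set g : ℕ → ℝ := fun k => (2 * ‖B‖ * ‖A‖ ^ m / m.factorial) * (‖A‖ ^ k / k.factorial)
    with hg
  have hgsum : Summable g := (Real.summable_pow_div_factorial ‖A‖).mul_left _
  have hgval : ∑' k, g k = 2 * ‖B‖ * ‖A‖ ^ m / m.factorial * Real.exp ‖A‖ := by
    rw [hg, tsum_mul_left]
    congr 1
    rw [Real.exp_eq_exp_ℝ, NormedSpace.exp_eq_tsum_div]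
  have hle : ∀ k : ℕ, ‖f (k + m)‖ ≤ g k := by
    intro k
    have h1 : ‖f (k + m)‖ ≤ 2 * ‖A‖ ^ (k + m) * ‖B‖ / (k + m).factorial :=
      hbound (k + m) (by omega)
    have hfact : (k.factorial * m.factorial : ℝ) ≤ ((k + m).factorial : ℝ) := by
      exact_mod_cast Nat.le_of_dvd (Nat.factorial_pos _)
        (Nat.factorial_mul_factorial_dvd_factorial_add k m)
    have h2 : 2 * ‖A‖ ^ (k + m) * ‖B‖ / ((k + m).factorial : ℝ) ≤
        2 * ‖A‖ ^ (k + m) * ‖B‖ / ((k.factorial : ℝ) * m.factorial) := by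
      gcongr

    have h3 : 2 * ‖A‖ ^ (k + m) * ‖B‖ / ((k.factorial : ℝ) * m.factorial) = g k := by
      rw [hg, pow_add]
      ring
    calc ‖f (k + m)‖ ≤ _ := h1
      _ ≤ _ := h2
      _ = g k := h3
  have hnormsum : Summable (fun k => ‖f (k + m)‖) :=
    Summable.of_nonneg_of_le (fun _ => norm_nonneg _) hle hgsum
  -- put everything together
  rw [hdiff]
  have hsplit : ∑' k, f k = ∑' k, f (k + m) := by
    rw [← hfsum.sum_add_tsum_nat_add m]
    rw [Finset.sum_eq_zero fun i hi => hzero i (Finset.mem_range.mp hi), zero_add]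
  rw [hsplit]
  calc ‖∑' k, f (k + m)‖ ≤ ∑' k, ‖f (k + m)‖ := norm_tsum_le_tsum_norm hnormsum
    _ ≤ ∑' k, g k := Summable.tsum_le_tsum hle hnormsum hgsum
    _ = 2 * ‖B‖ * ‖A‖ ^ m / m.factorial * Real.exp ‖A‖ := hgval
    _ = 2 * ‖B‖ * (‖A‖ ^ m * Real.exp ‖A‖ / m.factorial) := by ring
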